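/- In any Gallai r-coloring F of E(K_m) and any s with 2 ≤ s ≤ r, there is a set S of s colors with g(F,S) ≥ m^{C(s,2)/C(r,2)}. -/

import Mathlib

/-- `F` has no rainbow triangle. -/
def IsRainbowFree {V C : Type*} (F : V → V → C) : Prop :=
  ∀ u v w : V, u ≠ v → u ≠ w → v ≠ w →
    F u v = F u w ∨ F u v = F v w ∨ F u w = F v w

open Classical in
noncomputable def gRel {m r : ℕ} (F : Fin m → Fin m → Fin r)
    (W : Finset (Fin m)) (S : Finset (Fin r)) : ℕ :=
  (W.powerset.filter
    fun Z => ∀ u ∈ Z, ∀ v ∈ Z, u ≠ v → F u v ∈ S).sup Finset.card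

open Classical in
lemma le_gRel {m r : ℕ} (F : Fin m → Fin m → Fin r) {W : Finset (Fin m)}
    {S : Finset (Fin r)} {Z : Finset (Fin m)} (hZ : Z ⊆ W)
    (hcol : ∀ u ∈ Z, ∀ v ∈ Z, u ≠ v → F u v ∈ S) : Z.card ≤ gRel F W S := by
  apply Finset.le_sup
  simp only [Finset.mem_filter, Finset.mem_powerset]
  exact ⟨hZ, hcol⟩

open Classical in
lemma gRel_exists {m r : ℕ} (F : Fin m → Fin m → Fin r) (W : Finset (Fin m))
    (S : Finset (Fin r)) : ∃ Z : Finset (Fin m), Z ⊆ W ∧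
      (∀ u ∈ Z, ∀ v ∈ Z, u ≠ v → F u v ∈ S) ∧ Z.card = gRel F W S := by
  classical
  have hne : (W.powerset.filter
      fun Z => ∀ u ∈ Z, ∀ v ∈ Z, u ≠ v → F u v ∈ S).Nonempty := by
    refine ⟨∅, ?_⟩
    simp
  obtain ⟨Z, hZ, hcard⟩ := Finset.exists_mem_eq_sup _ hne Finset.card
  simp only [Finset.mem_filter, Finset.mem_powerset] at hZ
  exact ⟨Z, hZ.1, hZ.2, hcard.symm⟩

lemma gRel_mono {m r : ℕ} (F : Fin m → Fin m → Fin r) {U W : Finset (Fin m)}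
    (h : U ⊆ W) (S : Finset (Fin r)) : gRel F U S ≤ gRel F W S := by
  obtain ⟨Z, hZ, hcol, hcard⟩ := gRel_exists F U S
  rw [← hcard]; exact le_gRel F (hZ.trans h) hcol

lemma one_le_gRel {m r : ℕ} (F : Fin m → Fin m → Fin r) {W : Finset (Fin m)}
    (h : W.Nonempty) (S : Finset (Fin r)) : 1 ≤ gRel F W S := by
  obtain ⟨x, hx⟩ := h
  have := le_gRel (S := S) (Z := {x}) F (by simpa using hx)
    (fun u hu v hv huv => by
      simp only [Finset.mem_singleton] at hu hv
      exact absurd (hu.trans hv.symm) huv)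
  simpa using this

lemma gRel_superadd {m r : ℕ} (F : Fin m → Fin m → Fin r)
    (hsym : ∀ u v, F u v = F v u)
    {W U : Finset (Fin m)} (hUW : U ⊆ W) {S : Finset (Fin r)} {a b : Fin r}
    (ha : a ∈ S) (hb : b ∈ S)
    (hcross : ∀ u ∈ U, ∀ v ∈ W, v ∉ U → (F u v = a ∨ F u v = b)) :
    gRel F U S + gRel F (W \ U) S ≤ gRel F W S := by
  obtain ⟨Z1, hZ1, hcol1, hc1⟩ := gRel_exists F U S
  obtain ⟨Z2, hZ2, hcol2, hc2⟩ := gRel_exists F (W \ U) S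
  rw [← hc1, ← hc2]
  have hdisj : Disjoint Z1 Z2 := by
    refine Finset.disjoint_left.2 fun x hx1 hx2 => ?_
    exact (Finset.mem_sdiff.1 (hZ2 hx2)).2 (hZ1 hx1)
  rw [← Finset.card_union_of_disjoint hdisj]
  apply le_gRel F
  · intro x hx
    rcases Finset.mem_union.1 hx with h | h
    · exact hUW (hZ1 h)
    · exact (Finset.mem_sdiff.1 (hZ2 h)).1
  · intro u hu v hv huv
    rcases Finset.mem_union.1 hu with hu' | hu' <;>
      rcases Finset.mem_union.1 hv with hv' | hv'
    · exact hcol1 u hu' v hv' huv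
    · rcases hcross u (hZ1 hu') v (Finset.mem_sdiff.1 (hZ2 hv')).1
        (Finset.mem_sdiff.1 (hZ2 hv')).2 with h | h
      · rw [h]; exact ha
      · rw [h]; exact hb
    · rcases hcross v (hZ1 hv') u (Finset.mem_sdiff.1 (hZ2 hu')).1
        (Finset.mem_sdiff.1 (hZ2 hu')).2 with h | h
      · rw [hsym u v, h]; exact ha
      · rw [hsym u v, h]; exact hb
    · exact hcol2 u hu' v hv' huv

open Classical in
/-- `maxSub F S` is the size of the largest vertex set all of whose internal
edges have colors in `S`. -/
noncomputable def maxSub {m r : ℕ} (F : Fin m → Fin m → Fin r)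
    (S : Finset (Fin r)) : ℕ :=
  ((Finset.univ : Finset (Fin m)).powerset.filter
    fun Z => ∀ u ∈ Z, ∀ v ∈ Z, u ≠ v → F u v ∈ S).sup Finset.card

lemma weak_gallai {m r : ℕ} (F : Fin m → Fin m → Fin r)
    (hsym : ∀ u v, F u v = F v u) (hG : IsRainbowFree F) :
    ∀ V : Finset (Fin m), 2 ≤ V.card →
      ∃ a b : Fin r, ∃ U : Finset (Fin m), U ⊆ V ∧ U.Nonempty ∧ U ≠ V ∧
        ∀ u ∈ U, ∀ v ∈ V, v ∉ U → (F u v = a ∨ F u v = b) := by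
  classical
  intro V
  induction V using Finset.strongInduction with
  | _ V IH =>
  intro hV
  by_cases hcard : V.card = 2
  · obtain ⟨x, y, hxy, hVeq⟩ := Finset.card_eq_two.1 hcard
    refine ⟨F x y, F x y, {x}, ?_, ⟨x, Finset.mem_singleton_self x⟩, ?_, ?_⟩
    · simp [hVeq]
    · intro h
      have : y ∈ ({x} : Finset (Fin m)) := by rw [h, hVeq]; simp
      simp only [Finset.mem_singleton] at this
      exact hxy this.symm
    · intro u hu v hv hvnu
      simp only [Finset.mem_singleton] at hu
      subst hu
      have hvy : v = y := by
        rw [hVeq] at hv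
        simp only [Finset.mem_insert, Finset.mem_singleton] at hv
        rcases hv with h | h
        · exact absurd (by simp [h]) hvnu
        · exact h
      subst hvy; exact Or.inl rfl
  · have h3 : 3 ≤ V.card := by omega
    have hVne : V.Nonempty := Finset.card_pos.1 (by omega)
    obtain ⟨w, hw⟩ := hVne
    set V' := V.erase w with hV'def
    have hV'card : 2 ≤ V'.card := by
      rw [hV'def, Finset.card_erase_of_mem hw]; omega
    obtain ⟨a, b, U', hU'sub, hU'ne, hU'neq, hcross⟩ :=
      IH V' (Finset.erase_ssubset hw) hV'card
    have hwV' : w ∉ V' := Finset.notMem_erase w V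
    have hmemV' : ∀ z ∈ V', z ∈ V := fun z hz => Finset.mem_of_mem_erase hz
    have hznw : ∀ z ∈ V', z ≠ w := fun z hz => (Finset.mem_erase.1 hz).1
    have hwne : ∀ z ∈ V', w ≠ z := fun z hz => (hznw z hz).symm
    -- triangles through w
    have hGw : ∀ p q, p ∈ V' → q ∈ V' → p ≠ q →
        (F w p = F w q ∨ F w p = F p q ∨ F w q = F p q) :=
      fun p q hp hq hpq => hG w p q (hwne p hp) (hwne q hq) hpq
    by_cases case1 : ∀ z ∈ U', F w z = a ∨ F w z = b
    · refine ⟨a, b, U', hU'sub.trans (Finset.erase_subset w V), hU'ne, ?_, ?_⟩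
      · intro h
        exact hwV' (hU'sub (h ▸ hw))
      · intro u hu v hv hvnu
        by_cases hvw : v = w
        · subst hvw
          rw [hsym u v]
          exact case1 u hu
        · exact hcross u hu v (Finset.mem_erase.2 ⟨hvw, hv⟩) hvnu
    by_cases case1' : ∀ z ∈ V', z ∉ U' → F w z = a ∨ F w z = b
    · have hwU' : w ∉ U' := fun h => hwV' (hU'sub h)
      obtain ⟨v0, hv0V', hv0U'⟩ : ∃ v0 ∈ V', v0 ∉ U' := by
        obtain ⟨v0, hv0⟩ := Finset.exists_of_ssubset
          (Finset.ssubset_iff_subset_ne.2 ⟨hU'sub, hU'neq⟩)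
        exact ⟨v0, hv0.1, hv0.2⟩
      refine ⟨a, b, insert w U', ?_, ⟨w, Finset.mem_insert_self w U'⟩, ?_, ?_⟩
      · intro z hz
        rcases Finset.mem_insert.1 hz with h | h
        · exact h ▸ hw
        · exact hmemV' z (hU'sub h)
      · intro h
        have : v0 ∈ insert w U' := by rw [h]; exact hmemV' v0 hv0V'
        rcases Finset.mem_insert.1 this with h' | h'
        · exact (hznw v0 hv0V') h'
        · exact hv0U' h'
      · intro u hu v hv hvnu
        have hvw : v ≠ w := fun h => hvnu (h ▸ Finset.mem_insert_self w U')
        have hvU' : v ∉ U' := fun h => hvnu (Finset.mem_insert_of_mem h)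
        have hvV' : v ∈ V' := Finset.mem_erase.2 ⟨hvw, hv⟩
        rcases Finset.mem_insert.1 hu with h | h
        · subst h; exact case1' v hvV' hvU'
        · exact hcross u h v hvV' hvU'
    -- Case 2 : nonab edges from w on both sides
    push_neg at case1 case1'
    obtain ⟨z1, hz1U', hz1a, hz1b⟩ : ∃ z1 ∈ U', F w z1 ≠ a ∧ F w z1 ≠ b := by
      obtain ⟨z1, hz1, h⟩ := case1
      exact ⟨z1, hz1, h⟩
    obtain ⟨z2, hz2V', hz2U', hz2a, hz2b⟩ := case1'
    have hz1V' : z1 ∈ V' := hU'sub hz1U'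
    set c := F w z1 with hcdef
    have hca : c ≠ a := hz1a
    have hcb : c ≠ b := hz1b
    have hz1z2 : z1 ≠ z2 := fun h => hz2U' (h ▸ hz1U')
    have hz2c : F w z2 = c := by
      have hcr := hcross z1 hz1U' z2 hz2V' hz2U'
      rcases hGw z1 z2 hz1V' hz2V' hz1z2 with h | h | h
      · exact h.symm
      · rcases hcr with h' | h' <;> rw [h'] at h
        · exact absurd h.symm (fun h' => hz1a h'.symm)
        · exact absurd h.symm (fun h' => hz1b h'.symm)
      · rcases hcr with h' | h' <;> rw [h'] at h
        · exact absurd h hz2a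
        · exact absurd h hz2b
    have allc : ∀ p ∈ V', F w p ≠ a → F w p ≠ b → F w p = c := by
      intro p hp hpa hpb
      by_cases hpU : p ∈ U'
      · by_cases hpz2 : p = z2
        · rw [hpz2]; exact hz2c
        have hcr := hcross p hpU z2 hz2V' hz2U'
        rcases hGw p z2 hp hz2V' hpz2 with h | h | h
        · rw [h, hz2c]
        · rcases hcr with h' | h' <;> rw [h'] at h
          · exact absurd h hpa
          · exact absurd h hpb
        · rcases hcr with h' | h' <;> rw [h', hz2c] at h
          · exact absurd h.symm (fun h' => hca h'.symm)
          · exact absurd h.symm (fun h' => hcb h'.symm)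
      · by_cases hpz1 : p = z1
        · rw [hpz1]
        have hpz1' : z1 ≠ p := fun h => hpz1 h.symm
        have hcr := hcross z1 hz1U' p hp hpU
        rw [hsym z1 p] at hcr
        rcases hGw p z1 hp hz1V' hpz1 with h | h | h
        · exact h
        · rcases hcr with h' | h' <;> rw [h'] at h
          · exact absurd h hpa
          · exact absurd h hpb
        · rcases hcr with h' | h' <;> rw [h'] at h
          · exact absurd h hca
          · exact absurd h hcb
    by_cases h2a : ∀ z ∈ V', F w z = a ∨ F w z = c
    · refine ⟨a, c, {w}, by simpa using hw, ⟨w, Finset.mem_singleton_self w⟩, ?_, ?_⟩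
      · intro h
        have : z1 ∈ ({w} : Finset (Fin m)) := by rw [h]; exact hmemV' z1 hz1V'
        simp only [Finset.mem_singleton] at this
        exact (hznw z1 hz1V') this
      · intro u hu v hv hvnu
        simp only [Finset.mem_singleton] at hu
        subst hu
        have hvV' : v ∈ V' := Finset.mem_erase.2 ⟨by simpa using hvnu, hv⟩
        exact h2a v hvV'
    by_cases h2b : ∀ z ∈ V', F w z = b ∨ F w z = c
    · refine ⟨b, c, {w}, by simpa using hw, ⟨w, Finset.mem_singleton_self w⟩, ?_, ?_⟩
      · intro h
        have : z1 ∈ ({w} : Finset (Fin m)) := by rw [h]; exact hmemV' z1 hz1V'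
        simp only [Finset.mem_singleton] at this
        exact (hznw z1 hz1V') this
      · intro u hu v hv hvnu
        simp only [Finset.mem_singleton] at hu
        subst hu
        have hvV' : v ∈ V' := Finset.mem_erase.2 ⟨by simpa using hvnu, hv⟩
        exact h2b v hvV'
    push_neg at h2a h2b
    obtain ⟨y0, hy0V', hy0a, hy0c⟩ : ∃ y0 ∈ V', F w y0 ≠ a ∧ F w y0 ≠ c := by
      obtain ⟨y0, hy0, h⟩ := h2a
      exact ⟨y0, hy0, h⟩
    obtain ⟨x0, hx0V', hx0b, hx0c⟩ : ∃ x0 ∈ V', F w x0 ≠ b ∧ F w x0 ≠ c := by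
      obtain ⟨x0, hx0, h⟩ := h2b
      exact ⟨x0, hx0, h⟩
    have hx0a : F w x0 = a := by
      by_contra h
      exact hx0c (allc x0 hx0V' h hx0b)
    have hy0b : F w y0 = b := by
      by_contra h
      exact hy0c (allc y0 hy0V' hy0a h)
    have hab : a ≠ b := by
      intro h
      exact hx0b (hx0a.trans h)
    -- reachability in the non-{a,b} graph on V'
    set step : Fin m → Fin m → Prop :=
      fun p q => p ∈ V' ∧ q ∈ V' ∧ p ≠ q ∧ F p q ≠ a ∧ F p q ≠ b with hstepdef
    set reach := Relation.ReflTransGen step with hreachdef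
    have hstepsymm : ∀ p q, step p q → step q p := by
      rintro p q ⟨h1, h2, h3, h4, h5⟩
      exact ⟨h2, h1, h3.symm, by rwa [hsym q p], by rwa [hsym q p]⟩
    have hreachsymm : ∀ p q, reach p q → reach q p := fun p q h =>
      (@Relation.ReflTransGen.stdSymm _ step ⟨hstepsymm⟩).symm p q h
    have hreachV' : ∀ p q, reach p q → p ∈ V' → q ∈ V' := by
      intro p q h hp
      induction h with
      | refl => exact hp
      | tail h1 h2 ih => exact h2.2.1
    have hside : ∀ p q, reach p q → p ∈ U' → q ∈ U' := by
      intro p q h hp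
      induction h with
      | refl => exact hp
      | tail h1 h2 ih =>
        by_contra hq
        rcases hcross _ ih _ h2.2.1 hq with h' | h'
        · exact h2.2.2.2.1 h'
        · exact h2.2.2.2.2 h'
    have hside' : ∀ p q, reach p q → p ∉ U' → q ∉ U' := by
      intro p q h hp hq
      exact hp (hside q p (hreachsymm p q h) hq)
    have hnost : ∀ p q, p ∈ V' → q ∈ V' → p ≠ q → ¬ reach p q →
        (F p q = a ∨ F p q = b) := by
      intro p q hp hq hpq hnr
      by_contra hcon
      push_neg at hcon
      exact hnr (Relation.ReflTransGen.single ⟨hp, hq, hpq, hcon.1, hcon.2⟩)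
    by_cases hiso : ∃ x ∈ V', ∀ z ∈ V', reach x z → (F w z = a ∨ F w z = b)
    · obtain ⟨x, hxV', hxprop⟩ := hiso
      refine ⟨a, b, V'.filter (fun z => reach x z), ?_, ?_, ?_, ?_⟩
      · exact (Finset.filter_subset _ _).trans (Finset.erase_subset w V)
      · exact ⟨x, Finset.mem_filter.2 ⟨hxV', Relation.ReflTransGen.refl⟩⟩
      · intro h
        have : w ∈ V'.filter (fun z => reach x z) := h ▸ hw
        exact hwV' (Finset.mem_filter.1 this).1
      · intro u hu v hv hvnu
        obtain ⟨huV', hxu⟩ := Finset.mem_filter.1 hu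
        by_cases hvw : v = w
        · subst hvw
          rw [hsym u v]
          exact hxprop u huV' hxu
        · have hvV' : v ∈ V' := Finset.mem_erase.2 ⟨hvw, hv⟩
          have hxv : ¬ reach x v := fun h => hvnu (Finset.mem_filter.2 ⟨hvV', h⟩)
          have huv : u ≠ v := fun h => hxv (h ▸ hxu)
          exact hnost u v huV' hvV' huv (fun h => hxv (hxu.trans h))
    push_neg at hiso
    have hR3 : ∀ x ∈ V', ∃ z, z ∈ V' ∧ reach x z ∧ F w z = c := by
      intro x hx
      obtain ⟨z, hz, hrz, h1, h2⟩ := hiso x hx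
      exact ⟨z, hz, hrz, allc z hz h1 h2⟩
    exfalso
    -- the walk lemma
    have walk : ∀ (d : Fin r), d ≠ c →
        (∀ p q, step p q → F w p = d → (F w q = d ∨ (F w q = c ∧ F p q = c))) →
        ∀ x z, reach x z → F w x = d → F w z = c →
        ∃ x' u, reach x x' ∧ step x' u ∧ F w x' = d ∧ F w u = c ∧ F x' u = c := by
      intro d hdc hclass x z hreach
      induction hreach using Relation.ReflTransGen.head_induction_on with
      | refl =>
        intro h1 h2
        exact absurd (h1.symm.trans h2) hdc
      | head h' hrest ih =>
        intro hx hz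
        rcases hclass _ _ h' hx with h | ⟨h1, h2⟩
        · obtain ⟨x', u, hr, hs, h3, h4, h5⟩ := ih h hz
          exact ⟨x', u, Relation.ReflTransGen.head h' hr, hs, h3, h4, h5⟩
        · exact ⟨_, _, Relation.ReflTransGen.refl, h', hx, h1, h2⟩
    have hclassgen : ∀ (d e : Fin r), d ≠ e → ({d, e} : Set (Fin r)) = {a, b} →
        ∀ p q, step p q → F w p = d → (F w q = d ∨ (F w q = c ∧ F p q = c)) := by
      rintro d e hde hset p q ⟨hp, hq, hpq, h4, h5⟩ hpd
      have hFpqd : F p q ≠ d := by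
        intro h
        have : d ∈ ({a, b} : Set (Fin r)) := hset ▸ Set.mem_insert d {e}
        rcases this with h' | h'
        · exact h4 (h ▸ h')
        · exact h5 (h ▸ h')
      rcases hGw p q hp hq hpq with h | h | h
      · exact Or.inl (hpd ▸ h.symm)
      · exact absurd (hpd ▸ h).symm hFpqd
      · -- F w q = F p q, and F p q ∉ {a, b}, so F w q = c
        have hqa : F w q ≠ a := fun h' => h4 (h ▸ h' ▸ rfl)
        have hqb : F w q ≠ b := fun h' => h5 (h ▸ h' ▸ rfl)
        have hqc : F w q = c := allc q hq hqa hqb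
        exact Or.inr ⟨hqc, h ▸ hqc⟩

    have hclassa : ∀ p q, step p q → F w p = a → (F w q = a ∨ (F w q = c ∧ F p q = c)) :=
      hclassgen a b hab rfl
    have hclassb : ∀ p q, step p q → F w p = b → (F w q = b ∨ (F w q = c ∧ F p q = c)) :=
      hclassgen b a (Ne.symm hab) (Set.pair_comm b a)
    obtain ⟨zx, hzxV', hzxr, hzxc⟩ := hR3 x0 hx0V'
    obtain ⟨x', u, hrx, hsxu, hx'a, huc, hxuc⟩ :=
      walk a (fun h => hca h.symm) hclassa x0 zx hzxr hx0a hzxc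
    obtain ⟨zy, hzyV', hzyr, hzyc⟩ := hR3 y0 hy0V'
    obtain ⟨y', u', hry, hsyu, hy'b, hu'c, hyuc⟩ :=
      walk b (fun h => hcb h.symm) hclassb y0 zy hzyr hy0b hzyc
    have hx'V' : x' ∈ V' := hsxu.1
    have huV' : u ∈ V' := hsxu.2.1
    have hy'V' : y' ∈ V' := hsyu.1
    have hu'V' : u' ∈ V' := hsyu.2.1
    have necol : ∀ p q : Fin m, F w p ≠ F w q → p ≠ q := fun p q h e => h (by rw [e])
    have getu'' : ∀ p, p ∈ V' → ∃ t, t ∈ V' ∧ F w t = c ∧ ¬ reach p t := by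
      intro p hp
      by_cases hpU : p ∈ U'
      · obtain ⟨z, hzV, hrz, hzc⟩ := hR3 z2 hz2V'
        have hzU : z ∉ U' := hside' z2 z hrz hz2U'
        exact ⟨z, hzV, hzc, fun h => hzU (hside p z h hpU)⟩
      · obtain ⟨q0, hq0⟩ := hU'ne
        obtain ⟨z, hzV, hrz, hzc⟩ := hR3 q0 (hU'sub hq0)
        have hzU : z ∈ U' := hside q0 z hrz hq0
        exact ⟨z, hzV, hzc, fun h => (hside' p z h hpU) hzU⟩
    have hWa : ∀ p q, p ∈ V' → q ∈ V' → F w p = a → F w q = c → ¬ reach p q → F p q = a := by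
      intro p q hp hq hpa hqc hnr
      have hpq : p ≠ q := necol p q (by rw [hpa, hqc]; exact fun h => hca h.symm)
      rcases hnost p q hp hq hpq hnr with h | h
      · exact h
      · exfalso
        rcases hGw p q hp hq hpq with h' | h' | h'
        · rw [hpa, hqc] at h'; exact hca h'.symm
        · rw [hpa, h] at h'; exact hab h'
        · rw [hqc, h] at h'; exact hcb h'
    have hWb : ∀ p q, p ∈ V' → q ∈ V' → F w p = b → F w q = c → ¬ reach p q → F p q = b := by
      intro p q hp hq hpb hqc hnr
      have hpq : p ≠ q := necol p q (by rw [hpb, hqc]; exact fun h => hcb h.symm)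
      rcases hnost p q hp hq hpq hnr with h | h
      · exfalso
        rcases hGw p q hp hq hpq with h' | h' | h'
        · rw [hpb, hqc] at h'; exact hcb h'.symm
        · rw [hpb, h] at h'; exact hab h'.symm
        · rw [hqc, h] at h'; exact hca h'
      · exact h
    have hx'u : x' ≠ u := necol _ _ (by rw [hx'a, huc]; exact fun h => hca h.symm)
    have hy'u'ne : y' ≠ u' := necol _ _ (by rw [hy'b, hu'c]; exact fun h => hcb h.symm)
    have hy'une : y' ≠ u := necol _ _ (by rw [hy'b, huc]; exact fun h => hcb h.symm)
    have hrxu : reach x' u := Relation.ReflTransGen.single hsxu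
    have hryu' : reach y' u' := Relation.ReflTransGen.single hsyu
    by_cases huu' : reach u u'
    · obtain ⟨u'', hu''V, hu''c, hnru⟩ := getu'' u huV'
      have hnru' : ¬ reach u' u'' := fun h => hnru (huu'.trans h)
      have hnrx : ¬ reach x' u'' := fun h => hnru ((hreachsymm x' u hrxu).trans h)
      have hnry : ¬ reach y' u'' := fun h => hnru' ((hreachsymm y' u' hryu').trans h)
      have hx'u'' : F x' u'' = a := hWa x' u'' hx'V' hu''V hx'a hu''c hnrx
      have hy'u'' : F y' u'' = b := hWb y' u'' hy'V' hu''V hy'b hu''c hnry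
      have huu''ne : u ≠ u'' := fun e => hnru (e ▸ Relation.ReflTransGen.refl)
      have hx'u''ne : x' ≠ u'' := necol _ _ (by rw [hx'a, hu''c]; exact fun h => hca h.symm)
      have hy'u''ne : y' ≠ u'' := necol _ _ (by rw [hy'b, hu''c]; exact fun h => hcb h.symm)
      have huu''ab : F u u'' = a ∨ F u u'' = b := hnost u u'' huV' hu''V huu''ne hnru
      have huu''a : F u u'' = a := by
        rcases hG x' u u'' hx'u hx'u''ne huu''ne with h | h | h
        · rw [hxuc, hx'u''] at h; exact absurd h hca
        · rw [hxuc] at h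
          rcases huu''ab with h2 | h2 <;> rw [h2] at h
          · exact absurd h hca
          · exact absurd h hcb
        · rw [hx'u''] at h; exact h.symm
      by_cases hueq : u = u'
      · have hyu_c : F y' u = c := by rw [hueq]; exact hyuc
        rcases hG y' u u'' hy'une hy'u''ne huu''ne with h | h | h
        · rw [hyu_c, hy'u''] at h; exact hcb h
        · rw [hyu_c, huu''a] at h; exact hca h
        · rw [hy'u'', huu''a] at h; exact hab h.symm
      · have hu'u''ne : u' ≠ u'' := fun e => hnru' (e ▸ Relation.ReflTransGen.refl)
        have hu'u''ab : F u' u'' = a ∨ F u' u'' = b :=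
          hnost u' u'' hu'V' hu''V hu'u''ne hnru'
        have hu'u''b : F u' u'' = b := by
          rcases hG y' u' u'' hy'u'ne hy'u''ne hu'u''ne with h | h | h
          · rw [hyuc, hy'u''] at h; exact absurd h hcb
          · rw [hyuc] at h
            rcases hu'u''ab with h2 | h2 <;> rw [h2] at h
            · exact absurd h hca
            · exact absurd h hcb
          · rw [hy'u''] at h; exact h.symm
        have huu'ab : F u u' = a ∨ F u u' = b := by
          rcases hG u u' u'' hueq huu''ne hu'u''ne with h | h | h
          · rw [huu''a] at h; exact Or.inl h
          · rw [hu'u''b] at h; exact Or.inr h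
          · rw [huu''a, hu'u''b] at h; exact absurd h hab
        have hx'u'ne : x' ≠ u' := necol _ _ (by rw [hx'a, hu'c]; exact fun h => hca h.symm)
        have hx'u'cases : F x' u' = a ∨ F x' u' = c := by
          rcases hGw x' u' hx'V' hu'V' hx'u'ne with h | h | h
          · rw [hx'a, hu'c] at h; exact absurd h (fun hh => hca hh.symm)
          · rw [hx'a] at h; exact Or.inl h.symm
          · rw [hu'c] at h; exact Or.inr h.symm
        rcases hx'u'cases with hA | hC
        · have huu'a : F u u' = a := by
            rcases hG x' u u' hx'u hx'u'ne hueq with h | h | h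
            · rw [hxuc, hA] at h; exact absurd h hca
            · rw [hxuc] at h
              rcases huu'ab with h2 | h2 <;> rw [h2] at h
              · exact absurd h hca
              · exact absurd h hcb
            · rw [hA] at h; exact h.symm
          have hy'ucases : F y' u = b ∨ F y' u = c := by
            rcases hGw y' u hy'V' huV' hy'une with h | h | h
            · rw [hy'b, huc] at h; exact absurd h (fun hh => hcb hh.symm)
            · rw [hy'b] at h; exact Or.inl h.symm
            · rw [huc] at h; exact Or.inr h.symm
          rcases hy'ucases with h2 | h2
          · rcases hG y' u u' hy'une hy'u'ne hueq with h | h | h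
            · rw [h2, hyuc] at h; exact hcb h.symm
            · rw [h2, huu'a] at h; exact hab h.symm
            · rw [hyuc, huu'a] at h; exact hca h
          · rcases hG y' u u'' hy'une hy'u''ne huu''ne with h | h | h
            · rw [h2, hy'u''] at h; exact hcb h
            · rw [h2, huu''a] at h; exact hca h
            · rw [hy'u'', huu''a] at h; exact hab h.symm
        · rcases hG x' u' u'' hx'u'ne hx'u''ne hu'u''ne with h | h | h
          · rw [hC, hx'u''] at h; exact hca h
          · rw [hC, hu'u''b] at h; exact hcb h
          · rw [hx'u'', hu'u''b] at h; exact hab h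
    · have hne_uu' : u ≠ u' := fun e => huu' (e ▸ Relation.ReflTransGen.refl)
      have hnr1 : ¬ reach x' u' := fun h => huu' ((hreachsymm x' u hrxu).trans h)
      have hnr2 : ¬ reach y' u := fun h => huu' ((hreachsymm y' u h).trans hryu')
      have hx'u' : F x' u' = a := hWa x' u' hx'V' hu'V' hx'a hu'c hnr1
      have hy'u : F y' u = b := hWb y' u hy'V' huV' hy'b huc hnr2
      have huu'ab : F u u' = a ∨ F u u' = b := hnost u u' huV' hu'V' hne_uu' huu'
      have hx'u'ne : x' ≠ u' := necol _ _ (by rw [hx'a, hu'c]; exact fun h => hca h.symm)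
      have huu'a : F u u' = a := by
        rcases hG x' u u' hx'u hx'u'ne hne_uu' with h | h | h
        · rw [hxuc, hx'u'] at h; exact absurd h hca
        · rw [hxuc] at h
          rcases huu'ab with h2 | h2 <;> rw [h2] at h
          · exact absurd h hca
          · exact absurd h hcb
        · rw [hx'u'] at h; exact h.symm
      rcases hG y' u u' hy'une hy'u'ne hne_uu' with h | h | h
      · rw [hy'u, hyuc] at h; exact hcb h.symm
      · rw [hy'u, huu'a] at h; exact hab h.symm
      · rw [hyuc, huu'a] at h; exact hca h


lemma my_mahler {ι : Type*} (A : Finset ι) (hA : A.Nonempty) (f g : ι → ℝ)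
    (hf : ∀ i ∈ A, 0 < f i) (hg : ∀ i ∈ A, 0 < g i) :
    ((∏ i ∈ A, f i) ^ ((A.card : ℝ)⁻¹) + (∏ i ∈ A, g i) ^ ((A.card : ℝ)⁻¹)) ^ (A.card)
      ≤ ∏ i ∈ A, (f i + g i) := by
  have hKnat : A.card ≠ 0 := (Finset.card_pos.2 hA).ne'
  have hK : (0:ℝ) < A.card := by exact_mod_cast Finset.card_pos.2 hA
  set w : ι → ℝ := fun _ => (A.card : ℝ)⁻¹ with hwdef
  have hT : ∀ i ∈ A, 0 < f i + g i := fun i hi => add_pos (hf i hi) (hg i hi)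
  have hw0 : ∀ i ∈ A, 0 ≤ w i := fun i _ => inv_nonneg.2 hK.le
  have hw1 : ∑ i ∈ A, w i = 1 := by
    simp only [hwdef, Finset.sum_const, nsmul_eq_mul]
    field_simp
  have h1 := Real.geom_mean_le_arith_mean_weighted A w
    (fun i => f i / (f i + g i)) hw0 hw1
    (fun i hi => div_nonneg (hf i hi).le (hT i hi).le)
  have h2 := Real.geom_mean_le_arith_mean_weighted A w
    (fun i => g i / (f i + g i)) hw0 hw1
    (fun i hi => div_nonneg (hg i hi).le (hT i hi).le)
  have hsum : (∑ i ∈ A, w i * (f i / (f i + g i)))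
      + ∑ i ∈ A, w i * (g i / (f i + g i)) = 1 := by
    rw [← Finset.sum_add_distrib, ← hw1]
    apply Finset.sum_congr rfl
    intro i hi
    have hTi : f i / (f i + g i) + g i / (f i + g i) = 1 := by
      rw [← add_div, div_self (hT i hi).ne']
    rw [← mul_add, hTi, mul_one]
  have e1 : ∏ i ∈ A, (f i / (f i + g i)) ^ w i
      = (∏ i ∈ A, f i) ^ ((A.card : ℝ)⁻¹) / (∏ i ∈ A, (f i + g i)) ^ ((A.card : ℝ)⁻¹) := by
    have : ∀ i ∈ A, (f i / (f i + g i)) ^ w i = f i ^ ((A.card : ℝ)⁻¹) / (f i + g i) ^ ((A.card : ℝ)⁻¹) :=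
      fun i hi => Real.div_rpow (hf i hi).le (hT i hi).le _
    rw [Finset.prod_congr rfl this, Finset.prod_div_distrib,
      Real.finset_prod_rpow A f (fun i hi => (hf i hi).le),
      Real.finset_prod_rpow A _ (fun i hi => (hT i hi).le)]
  have e2 : ∏ i ∈ A, (g i / (f i + g i)) ^ w i
      = (∏ i ∈ A, g i) ^ ((A.card : ℝ)⁻¹) / (∏ i ∈ A, (f i + g i)) ^ ((A.card : ℝ)⁻¹) := by
    have : ∀ i ∈ A, (g i / (f i + g i)) ^ w i = g i ^ ((A.card : ℝ)⁻¹) / (f i + g i) ^ ((A.card : ℝ)⁻¹) :=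
      fun i hi => Real.div_rpow (hg i hi).le (hT i hi).le _
    rw [Finset.prod_congr rfl this, Finset.prod_div_distrib,
      Real.finset_prod_rpow A g (fun i hi => (hg i hi).le),
      Real.finset_prod_rpow A _ (fun i hi => (hT i hi).le)]
  rw [e1] at h1
  rw [e2] at h2
  have hTpos : 0 < ∏ i ∈ A, (f i + g i) := Finset.prod_pos hT
  have hTr : 0 < (∏ i ∈ A, (f i + g i)) ^ ((A.card : ℝ)⁻¹) := Real.rpow_pos_of_pos hTpos _
  have key : ((∏ i ∈ A, f i) ^ ((A.card : ℝ)⁻¹) + (∏ i ∈ A, g i) ^ ((A.card : ℝ)⁻¹))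
      / (∏ i ∈ A, (f i + g i)) ^ ((A.card : ℝ)⁻¹) ≤ 1 := by
    rw [add_div]
    calc _ ≤ (∑ i ∈ A, w i * (f i / (f i + g i)))
        + ∑ i ∈ A, w i * (g i / (f i + g i)) := add_le_add h1 h2
      _ = 1 := hsum
  have main : (∏ i ∈ A, f i) ^ ((A.card : ℝ)⁻¹) + (∏ i ∈ A, g i) ^ ((A.card : ℝ)⁻¹)
      ≤ (∏ i ∈ A, (f i + g i)) ^ ((A.card : ℝ)⁻¹) := (div_le_one hTr).1 key
  calc ((∏ i ∈ A, f i) ^ ((A.card : ℝ)⁻¹) + (∏ i ∈ A, g i) ^ ((A.card : ℝ)⁻¹)) ^ A.card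
      ≤ ((∏ i ∈ A, (f i + g i)) ^ ((A.card : ℝ)⁻¹)) ^ A.card := by
        apply pow_le_pow_left₀ ?_ main
        exact add_nonneg
          (Real.rpow_nonneg (Finset.prod_nonneg fun i hi => (hf i hi).le) _)
          (Real.rpow_nonneg (Finset.prod_nonneg fun i hi => (hg i hi).le) _)
    _ = ∏ i ∈ A, (f i + g i) := Real.rpow_inv_natCast_pow hTpos.le hKnat

lemma step_ineq (K : ℕ) (hK : 1 ≤ K) (u v P1 P2 y1 y2 : ℝ)
    (hu : 0 ≤ u) (hv : 0 ≤ v) (hy1 : 1 ≤ y1) (hy2 : 1 ≤ y2)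
    (hP1 : 0 < P1) (hP2 : 0 < P2)
    (h1 : u ^ K ≤ P1 * y1) (h2 : v ^ K ≤ P2 * y2) :
    (u + v) ^ K ≤ (P1 ^ ((K:ℝ)⁻¹) + P2 ^ ((K:ℝ)⁻¹)) ^ K * max y1 y2 := by
  have hK0 : K ≠ 0 := by omega
  set M := max y1 y2 with hMdef
  have hM1 : (1:ℝ) ≤ M := le_trans hy1 (le_max_left _ _)
  have hM : (0:ℝ) < M := by linarith
  have hMr : 0 < M ^ ((K:ℝ)⁻¹) := Real.rpow_pos_of_pos hM _
  have k1 : u / M ^ ((K:ℝ)⁻¹) ≤ P1 ^ ((K:ℝ)⁻¹) := by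
    have hb : u ^ K ≤ P1 * M :=
      h1.trans (mul_le_mul_of_nonneg_left (le_max_left _ _) hP1.le)
    have hu' : u ≤ (P1 * M) ^ ((K:ℝ)⁻¹) := by
      calc u = (u ^ K) ^ ((K:ℝ)⁻¹) := (Real.pow_rpow_inv_natCast hu hK0).symm
        _ ≤ (P1 * M) ^ ((K:ℝ)⁻¹) :=
          Real.rpow_le_rpow (pow_nonneg hu K) hb (inv_nonneg.2 (Nat.cast_nonneg K))
    rw [Real.mul_rpow hP1.le hM.le] at hu'
    rw [div_le_iff₀ hMr]
    exact hu'
  have k2 : v / M ^ ((K:ℝ)⁻¹) ≤ P2 ^ ((K:ℝ)⁻¹) := by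
    have hb : v ^ K ≤ P2 * M :=
      h2.trans (mul_le_mul_of_nonneg_left (le_max_right _ _) hP2.le)
    have hv' : v ≤ (P2 * M) ^ ((K:ℝ)⁻¹) := by
      calc v = (v ^ K) ^ ((K:ℝ)⁻¹) := (Real.pow_rpow_inv_natCast hv hK0).symm
        _ ≤ (P2 * M) ^ ((K:ℝ)⁻¹) :=
          Real.rpow_le_rpow (pow_nonneg hv K) hb (inv_nonneg.2 (Nat.cast_nonneg K))
    rw [Real.mul_rpow hP2.le hM.le] at hv'
    rw [div_le_iff₀ hMr]
    exact hv'
  have ksum : (u + v) / M ^ ((K:ℝ)⁻¹) ≤ P1 ^ ((K:ℝ)⁻¹) + P2 ^ ((K:ℝ)⁻¹) := by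
    rw [add_div]; exact add_le_add k1 k2
  have h3 : ((u + v) / M ^ ((K:ℝ)⁻¹)) ^ K ≤ (P1 ^ ((K:ℝ)⁻¹) + P2 ^ ((K:ℝ)⁻¹)) ^ K :=
    pow_le_pow_left₀ (by positivity) ksum K
  rw [div_pow, Real.rpow_inv_natCast_pow hM.le hK0] at h3
  exact (div_le_iff₀ hM).1 h3

lemma exists_A {r s : ℕ} (hs : 2 ≤ s) (hsr : s ≤ r) (a b : Fin r) :
    ∃ A ⊆ Finset.powersetCard s (Finset.univ : Finset (Fin r)),
      A.card = (r-2).choose (s-2) ∧ ∀ S ∈ A, a ∈ S ∧ b ∈ S := by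
  classical
  set base := (Finset.powersetCard s (Finset.univ : Finset (Fin r))).filter
    (fun S => a ∈ S ∧ b ∈ S) with hbase
  suffices hcard : (r-2).choose (s-2) ≤ base.card by
    obtain ⟨A, h1, h2⟩ := Finset.exists_subset_card_eq hcard
    exact ⟨A, h1.trans (Finset.filter_subset _ _), h2,
      fun S hS => (Finset.mem_filter.1 (h1 hS)).2⟩
  by_cases hab : a = b
  · subst hab
    have hmap : ∀ T ∈ Finset.powersetCard (s-1) (Finset.univ.erase a),
        insert a T ∈ base := by
      intro T hT
      rw [Finset.mem_powersetCard] at hT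
      have haT : a ∉ T := fun h => (Finset.mem_erase.1 (hT.1 h)).1 rfl
      rw [hbase, Finset.mem_filter, Finset.mem_powersetCard]
      refine ⟨⟨Finset.subset_univ _, ?_⟩, Finset.mem_insert_self a T,
        Finset.mem_insert_self a T⟩
      rw [Finset.card_insert_of_notMem haT, hT.2]
      omega
    have hinj : Set.InjOn (fun T => insert a T)
        (↑(Finset.powersetCard (s-1) (Finset.univ.erase a)) : Set (Finset (Fin r))) := by
      intro T1 h1 T2 h2 he
      simp only [Finset.mem_coe, Finset.mem_powersetCard] at h1 h2
      have h1a : a ∉ T1 := fun h => (Finset.mem_erase.1 (h1.1 h)).1 rfl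
      have h2a : a ∉ T2 := fun h => (Finset.mem_erase.1 (h2.1 h)).1 rfl
      have : (insert a T1).erase a = (insert a T2).erase a := by
        simp only at he; rw [he]
      rwa [Finset.erase_insert h1a, Finset.erase_insert h2a] at this
    have hle := Finset.card_le_card_of_injOn _ hmap hinj
    rw [Finset.card_powersetCard, Finset.card_erase_of_mem (Finset.mem_univ a),
      Finset.card_univ, Fintype.card_fin] at hle
    refine le_trans ?_ hle
    have h1 : r - 1 = (r - 2) + 1 := by omega
    have h2 : s - 1 = (s - 2) + 1 := by omega
    rw [h1, h2, Nat.choose_succ_succ]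
    omega
  · have hmap : ∀ T ∈ Finset.powersetCard (s-2) ((Finset.univ.erase a).erase b),
        insert a (insert b T) ∈ base := by
      intro T hT
      rw [Finset.mem_powersetCard] at hT
      have hbT : b ∉ T := fun h => (Finset.mem_erase.1 (hT.1 h)).1 rfl
      have haT : a ∉ T := fun h => (Finset.mem_erase.1 (Finset.mem_of_mem_erase (hT.1 h))).1 rfl
      have haiT : a ∉ insert b T := by
        simp only [Finset.mem_insert]
        rintro (h | h)
        · exact hab h
        · exact haT h
      rw [hbase, Finset.mem_filter, Finset.mem_powersetCard]
      refine ⟨⟨Finset.subset_univ _, ?_⟩, Finset.mem_insert_self a _,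
        Finset.mem_insert_of_mem (Finset.mem_insert_self b T)⟩
      rw [Finset.card_insert_of_notMem haiT, Finset.card_insert_of_notMem hbT, hT.2]
      omega
    have hinj : Set.InjOn (fun T => insert a (insert b T))
        (↑(Finset.powersetCard (s-2) ((Finset.univ.erase a).erase b)) : Set (Finset (Fin r))) := by
      intro T1 h1 T2 h2 he
      simp only [Finset.mem_coe, Finset.mem_powersetCard] at h1 h2
      have hbT1 : b ∉ T1 := fun h => (Finset.mem_erase.1 (h1.1 h)).1 rfl
      have haT1 : a ∉ insert b T1 := by
        simp only [Finset.mem_insert]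
        rintro (h | h)
        · exact hab h
        · exact (Finset.mem_erase.1 (Finset.mem_of_mem_erase (h1.1 h))).1 rfl
      have hbT2 : b ∉ T2 := fun h => (Finset.mem_erase.1 (h2.1 h)).1 rfl
      have haT2 : a ∉ insert b T2 := by
        simp only [Finset.mem_insert]
        rintro (h | h)
        · exact hab h
        · exact (Finset.mem_erase.1 (Finset.mem_of_mem_erase (h2.1 h))).1 rfl
      have : ((insert a (insert b T1)).erase a).erase b
          = ((insert a (insert b T2)).erase a).erase b := by
        simp only at he; rw [he]
      rwa [Finset.erase_insert haT1, Finset.erase_insert haT2,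
        Finset.erase_insert hbT1, Finset.erase_insert hbT2] at this
    have hle := Finset.card_le_card_of_injOn _ hmap hinj
    rw [Finset.card_powersetCard, Finset.card_erase_of_mem
        (Finset.mem_erase.2 ⟨Ne.symm hab, Finset.mem_univ b⟩),
      Finset.card_erase_of_mem (Finset.mem_univ a),
      Finset.card_univ, Fintype.card_fin] at hle
    have : r - 1 - 1 = r - 2 := by omega
    rwa [this] at hle


lemma one_le_prod_real {ι : Type*} (s : Finset ι) (f : ι → ℝ)
    (h : ∀ i ∈ s, 1 ≤ f i) : 1 ≤ ∏ i ∈ s, f i := by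
  calc (1:ℝ) = ∏ _i ∈ s, 1 := Finset.prod_const_one.symm
    _ ≤ ∏ i ∈ s, f i := Finset.prod_le_prod (fun i _ => zero_le_one) h

lemma prod_le_pow_card_real {ι : Type*} (s : Finset ι) (f : ι → ℝ) (n : ℝ)
    (h0 : ∀ i ∈ s, 0 ≤ f i) (h : ∀ i ∈ s, f i ≤ n) : ∏ i ∈ s, f i ≤ n ^ s.card := by
  calc ∏ i ∈ s, f i ≤ ∏ _i ∈ s, n := Finset.prod_le_prod h0 h
    _ = n ^ s.card := Finset.prod_const n

lemma prod_lemma {m r : ℕ} (s : ℕ) (hs : 2 ≤ s) (hsr : s ≤ r)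
    (F : Fin m → Fin m → Fin r) (hsym : ∀ u v, F u v = F v u) (hG : IsRainbowFree F) :
    ∀ W : Finset (Fin m),
      (W.card : ℝ) ^ ((r-2).choose (s-2)) ≤
        ∏ S ∈ Finset.powersetCard s (Finset.univ : Finset (Fin r)), (gRel F W S : ℝ) := by
  classical
  intro W
  induction W using Finset.strongInduction with
  | _ W IH =>
  have hK1 : 1 ≤ (r-2).choose (s-2) := Nat.choose_pos (by omega)
  set K := (r-2).choose (s-2) with hKdef
  set P := Finset.powersetCard s (Finset.univ : Finset (Fin r)) with hPdef
  by_cases h0 : W.card ≤ 1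
  · rcases Nat.le_one_iff_eq_zero_or_eq_one.1 h0 with h | h
    · have hc : ((W.card : ℕ):ℝ) = 0 := by rw [h]; norm_num
      rw [hc, zero_pow (by omega)]
      exact Finset.prod_nonneg fun S _ => Nat.cast_nonneg _
    · have hc : ((W.card : ℕ):ℝ) = 1 := by rw [h]; norm_num
      rw [hc, one_pow]
      have h1le : ∀ S ∈ P, (1:ℝ) ≤ (gRel F W S : ℝ) := fun S _ => by
        exact_mod_cast one_le_gRel F (Finset.card_pos.1 (by omega)) S
      exact one_le_prod_real P _ h1le
  · have hW2 : 2 ≤ W.card := by omega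
    obtain ⟨a, b, U, hUW, hUne, hUneq, hcross⟩ := weak_gallai F hsym hG W hW2
    have hUss : U ⊂ W := Finset.ssubset_iff_subset_ne.2 ⟨hUW, hUneq⟩
    set Wc := W \ U with hWcdef
    have hWcne : Wc.Nonempty := by
      obtain ⟨v, hv⟩ := Finset.exists_of_ssubset hUss
      exact ⟨v, Finset.mem_sdiff.2 ⟨hv.1, hv.2⟩⟩
    have hWcss : Wc ⊂ W := Finset.sdiff_ssubset hUW hUne
    have hsum : U.card + Wc.card = W.card := by
      rw [hWcdef, Finset.card_sdiff_of_subset hUW]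
      have := Finset.card_le_card hUW
      omega
    have IH1 := IH U hUss
    have IH2 := IH Wc hWcss
    obtain ⟨A, hAsub, hAcard, hAmem⟩ := exists_A hs hsr a b
    have hAne : A.Nonempty := Finset.card_pos.1 (by rw [hAcard]; omega)
    have hf1 : ∀ S, (1:ℝ) ≤ (gRel F U S : ℝ) := fun S => by
      exact_mod_cast one_le_gRel F hUne S
    have hg1 : ∀ S, (1:ℝ) ≤ (gRel F Wc S : ℝ) := fun S => by
      exact_mod_cast one_le_gRel F hWcne S
    have hfpos : ∀ S, (0:ℝ) < (gRel F U S : ℝ) := fun S => lt_of_lt_of_le zero_lt_one (hf1 S)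
    have hgpos : ∀ S, (0:ℝ) < (gRel F Wc S : ℝ) := fun S => lt_of_lt_of_le zero_lt_one (hg1 S)
    have hsup : ∀ S ∈ A, (gRel F U S : ℝ) + (gRel F Wc S : ℝ) ≤ (gRel F W S : ℝ) := by
      intro S hS
      exact_mod_cast gRel_superadd F hsym hUW (hAmem S hS).1 (hAmem S hS).2 hcross
    have hb1 : ((∏ S ∈ A, (gRel F U S : ℝ)) ^ ((K:ℝ)⁻¹)
          + (∏ S ∈ A, (gRel F Wc S : ℝ)) ^ ((K:ℝ)⁻¹)) ^ K
        ≤ ∏ S ∈ A, (gRel F W S : ℝ) := by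
      have := my_mahler A hAne (fun S => (gRel F U S : ℝ)) (fun S => (gRel F Wc S : ℝ))
        (fun S _ => hfpos S) (fun S _ => hgpos S)
      rw [hAcard] at this
      refine le_trans this ?_
      exact Finset.prod_le_prod (fun S _ => by positivity) hsup
    have hb2 : max (∏ S ∈ P \ A, (gRel F U S : ℝ)) (∏ S ∈ P \ A, (gRel F Wc S : ℝ))
        ≤ ∏ S ∈ P \ A, (gRel F W S : ℝ) := by
      apply max_le
      · refine Finset.prod_le_prod (fun S _ => (hfpos S).le) fun S _ => ?_
        exact_mod_cast gRel_mono F hUW S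
      · refine Finset.prod_le_prod (fun S _ => (hgpos S).le) fun S _ => ?_
        exact_mod_cast gRel_mono F (Finset.sdiff_subset) S
    have hIH1' : ((U.card:ℕ):ℝ) ^ K
        ≤ (∏ S ∈ A, (gRel F U S : ℝ)) * ∏ S ∈ P \ A, (gRel F U S : ℝ) := by
      refine le_trans IH1 ?_
      rw [mul_comm, Finset.prod_sdiff hAsub]
    have hIH2' : ((Wc.card:ℕ):ℝ) ^ K
        ≤ (∏ S ∈ A, (gRel F Wc S : ℝ)) * ∏ S ∈ P \ A, (gRel F Wc S : ℝ) := by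
      refine le_trans IH2 ?_
      rw [mul_comm, Finset.prod_sdiff hAsub]
    have hy1 : (1:ℝ) ≤ ∏ S ∈ P \ A, (gRel F U S : ℝ) :=
      one_le_prod_real _ _ fun S _ => hf1 S
    have hy2 : (1:ℝ) ≤ ∏ S ∈ P \ A, (gRel F Wc S : ℝ) :=
      one_le_prod_real _ _ fun S _ => hg1 S
    have hstep := step_ineq K hK1 (U.card:ℝ) (Wc.card:ℝ)
      (∏ S ∈ A, (gRel F U S : ℝ)) (∏ S ∈ A, (gRel F Wc S : ℝ))
      (∏ S ∈ P \ A, (gRel F U S : ℝ)) (∏ S ∈ P \ A, (gRel F Wc S : ℝ))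
      (Nat.cast_nonneg _) (Nat.cast_nonneg _)
      hy1 hy2
      (Finset.prod_pos fun S _ => hfpos S)
      (Finset.prod_pos fun S _ => hgpos S)
      hIH1' hIH2'
    have hcast : ((W.card:ℕ):ℝ) = (U.card:ℝ) + (Wc.card:ℝ) := by
      exact_mod_cast hsum.symm
    calc ((W.card:ℕ):ℝ) ^ K = ((U.card:ℝ) + (Wc.card:ℝ)) ^ K := by rw [hcast]
      _ ≤ ((∏ S ∈ A, (gRel F U S : ℝ)) ^ ((K:ℝ)⁻¹)
            + (∏ S ∈ A, (gRel F Wc S : ℝ)) ^ ((K:ℝ)⁻¹)) ^ K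
          * max (∏ S ∈ P \ A, (gRel F U S : ℝ)) (∏ S ∈ P \ A, (gRel F Wc S : ℝ)) := hstep
      _ ≤ (∏ S ∈ A, (gRel F W S : ℝ)) * ∏ S ∈ P \ A, (gRel F W S : ℝ) := by
          apply mul_le_mul hb1 hb2
          · exact le_max_of_le_left (Finset.prod_nonneg fun S _ => (hfpos S).le)
          · exact Finset.prod_nonneg fun S _ => Nat.cast_nonneg _
      _ = ∏ S ∈ P, (gRel F W S : ℝ) := by rw [mul_comm, Finset.prod_sdiff hAsub]

/-- In any Gallai `r`-coloring `F` of `E(K_m)` and any `s` with `2 ≤ s ≤ r`,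
there is a set `S` of `s` colors with `maxSub F S ≥ m^{C(s,2)/C(r,2)}`. -/
theorem gallai_weak_lower (r s m : ℕ) (hs : 2 ≤ s) (hsr : s ≤ r)
    (F : Fin m → Fin m → Fin r)
    (hsym : ∀ u v, F u v = F v u) (hG : IsRainbowFree F) :
    ∃ S ∈ Finset.powersetCard s (Finset.univ : Finset (Fin r)),
      (m : ℝ) ^ ((s.choose 2 : ℝ) / (r.choose 2 : ℝ)) ≤ (maxSub F S : ℝ) := by
  classical
  set K := (r-2).choose (s-2) with hKdef
  set P := Finset.powersetCard s (Finset.univ : Finset (Fin r)) with hPdef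
  have hprod := prod_lemma s hs hsr F hsym hG Finset.univ
  rw [Finset.card_univ, Fintype.card_fin] at hprod
  have hPne : P.Nonempty := by
    rw [hPdef]
    apply Finset.powersetCard_nonempty.2
    rw [Finset.card_univ, Fintype.card_fin]
    exact hsr
  obtain ⟨S0, hS0, hSmax⟩ := Finset.exists_max_image P (fun S => gRel F Finset.univ S) hPne
  have hN : P.card = r.choose s := by
    rw [hPdef, Finset.card_powersetCard, Finset.card_univ, Fintype.card_fin]
  have hNne : P.card ≠ 0 := by rw [hN]; exact (Nat.choose_pos hsr).ne'
  have hchain : (m:ℝ) ^ K ≤ (gRel F Finset.univ S0 : ℝ) ^ P.card := by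
    refine hprod.trans ?_
    have hble : ∀ S ∈ P, (gRel F Finset.univ S : ℝ) ≤ (gRel F Finset.univ S0 : ℝ) :=
      fun S hS => by exact_mod_cast hSmax S hS
    have := prod_le_pow_card_real P (fun S => (gRel F Finset.univ S : ℝ))
      (gRel F Finset.univ S0 : ℝ) (fun S _ => Nat.cast_nonneg _) hble
    exact this
  refine ⟨S0, hS0, ?_⟩
  have hgr : (maxSub F S0 : ℝ) = (gRel F Finset.univ S0 : ℝ) := rfl
  rw [hgr]
  have hid : (s.choose 2 : ℝ) / (r.choose 2 : ℝ) = (K : ℝ) / (P.card : ℝ) := by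
    have hnat : r.choose s * s.choose 2 = r.choose 2 * K := Nat.choose_mul (n := r) hs
    have h2pos : (0:ℝ) < (r.choose 2 : ℝ) := by
      exact_mod_cast Nat.choose_pos (le_trans hs hsr)
    have hNpos : (0:ℝ) < (P.card : ℝ) := by
      rw [hN]; exact_mod_cast Nat.choose_pos hsr
    rw [div_eq_div_iff h2pos.ne' hNpos.ne', hN]
    have hnat' : s.choose 2 * r.choose s = K * r.choose 2 := by
      rw [mul_comm, hnat, mul_comm]
    exact_mod_cast hnat'
  rw [hid]
  have hg0 : (0:ℝ) ≤ (gRel F Finset.univ S0 : ℝ) := Nat.cast_nonneg _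
  have e1 : (m:ℝ) ^ ((K:ℝ)/(P.card:ℝ)) = ((m:ℝ) ^ (K:ℕ)) ^ (((P.card:ℕ):ℝ)⁻¹) := by
    rw [div_eq_mul_inv, Real.rpow_mul (Nat.cast_nonneg m), Real.rpow_natCast]
  rw [e1]
  calc ((m:ℝ) ^ (K:ℕ)) ^ (((P.card:ℕ):ℝ)⁻¹)
      ≤ ((gRel F Finset.univ S0 : ℝ) ^ P.card) ^ (((P.card:ℕ):ℝ)⁻¹) :=
        Real.rpow_le_rpow (by positivity) hchain (inv_nonneg.2 (Nat.cast_nonneg _))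
    _ = (gRel F Finset.univ S0 : ℝ) := Real.pow_rpow_inv_natCast hg0 hNne
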